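/- Suppose E, Ẽ: ℂ → ℂ^{n×n} are matrix polynomials, both invertible at every point of the open unit disk, and E(w)*E(w) = Ẽ(w)*Ẽ(w) for all w on the unit circle. Then there exists a constant n×n unitary matrix U with Ẽ(w) = U E(w) for all w ∈ ℂ. -/

import Mathlib

open Polynomial Matrix

noncomputable section MPUaux

/-- reversal-style polynomial: `refl N p (w) = w^N * p (1/w)` for `w ≠ 0`, `N ≥ deg p`. -/
def mpuRefl (N : ℕ) (p : ℂ[X]) : ℂ[X] :=
  ∑ i ∈ Finset.range (N + 1), Polynomial.C (p.coeff i) * Polynomial.X ^ (N - i)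

lemma mpuRefl_eval {N : ℕ} {p : ℂ[X]} (hN : p.natDegree ≤ N) {w : ℂ} (hw : w ≠ 0) :
    (mpuRefl N p).eval w = w ^ N * p.eval w⁻¹ := by
  rw [mpuRefl, Polynomial.eval_finset_sum, Polynomial.eval_eq_sum_range' (lt_of_le_of_lt hN (Nat.lt_succ_self N)), Finset.mul_sum]
  refine Finset.sum_congr rfl fun i hi => ?_
  simp only [Finset.mem_range] at hi
  rw [Polynomial.eval_mul, Polynomial.eval_C, Polynomial.eval_pow, Polynomial.eval_X]
  have : w ^ N = w ^ (N - i) * w ^ i := by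
    rw [← pow_add]; congr 1; omega
  rw [this]
  field_simp [inv_pow]
  rw [mul_assoc, ← mul_pow]; simp [hw]

lemma mpuRefl_eval_zero {N : ℕ} (p : ℂ[X]) :
    (mpuRefl N p).eval 0 = p.coeff N := by
  rw [mpuRefl, Polynomial.eval_finset_sum]
  have hcong : ∀ i ∈ Finset.range (N + 1),
      Polynomial.eval 0 (Polynomial.C (p.coeff i) * Polynomial.X ^ (N - i)) =
        if i = N then p.coeff i else 0 := by
    intro i hi
    simp only [Finset.mem_range] at hi
    by_cases h : i = N
    · subst h; simp
    · have : N - i ≠ 0 := by omega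
      simp [zero_pow this, h]
  rw [Finset.sum_congr rfl hcong, Finset.sum_ite_eq' (Finset.range (N + 1)) N]
  simp

/-- equality from agreeing on an infinite set -/
lemma mpu_eq_of_eval_eq {p q : ℂ[X]} (S : Set ℂ) (hS : S.Infinite)
    (h : ∀ w ∈ S, p.eval w = q.eval w) : p = q := by
  by_contra hne
  have h0 : p - q ≠ 0 := sub_ne_zero.mpr hne
  have : S ⊆ {x | (p - q).IsRoot x} := fun w hw => by
    simp [Polynomial.IsRoot, h w hw]
  exact h0 (Polynomial.eq_zero_of_infinite_isRoot _ (hS.mono this))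

lemma mpu_circle_infinite : {w : ℂ | ‖w‖ = 1}.Infinite := by
  have hinj : Set.InjOn (fun t : ℝ => Complex.exp (t * Complex.I)) (Set.Ioo 0 1) := by
    intro s hs t ht hst
    simp only at hst
    rw [Complex.exp_eq_exp_iff_exists_int] at hst
    obtain ⟨k, hk⟩ := hst
    have : (s : ℂ) = t + k * (2 * Real.pi) := by
      have := hk
      field_simp at this ⊢
      have h2 : (s : ℂ) * Complex.I - t * Complex.I - k * (2 * Real.pi) * Complex.I = 0 := by
        rw [hk]; ring
      have h3 : ((s : ℂ) - t - k * (2 * Real.pi)) * Complex.I = 0 := by rw [← h2]; ring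
      have h4 : (s : ℂ) - t - k * (2 * Real.pi) = 0 := by
        rcases mul_eq_zero.mp h3 with h | h
        · exact h
        · exact absurd h Complex.I_ne_zero
      linear_combination h4
    have hker : s = t + k * (2 * Real.pi) := by
      exact_mod_cast this
    have hk0 : k = 0 := by
      rcases hs with ⟨hs1, hs2⟩; rcases ht with ⟨ht1, ht2⟩
      by_contra hk0
      have : (1 : ℝ) ≤ |(k : ℝ)| := by
        have h1 : 1 ≤ |k| := Int.one_le_abs hk0
        calc (1:ℝ) ≤ (|k| : ℤ) := by exact_mod_cast h1
        _ = |(k:ℝ)| := by push_cast; ring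
      have hpi : (6 : ℝ) ≤ |(k : ℝ)| * (2 * Real.pi) := by
        have := Real.pi_gt_three
        nlinarith [abs_nonneg ((k:ℝ))]
      have : |s - t| < 1 := by rw [abs_sub_lt_iff]; constructor <;> linarith
      rw [hker] at this
      have habs : |(k : ℝ) * (2 * Real.pi)| = |(k:ℝ)| * (2 * Real.pi) := by
        rw [abs_mul, abs_of_pos (by positivity : (0:ℝ) < 2 * Real.pi)]
      simp only [add_sub_cancel_left] at this
      rw [habs] at this
      linarith
    rw [hker, hk0]; simp
  have himg : (fun t : ℝ => Complex.exp (t * Complex.I)) '' (Set.Ioo 0 1) ⊆ {w : ℂ | ‖w‖ = 1} := by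
    rintro _ ⟨t, _, rfl⟩
    simp [Complex.norm_exp]
  exact Set.Infinite.mono himg ((Set.Ioo_infinite (by norm_num)).image hinj)

end MPUaux

open Polynomial Matrix

noncomputable section MPUaux2

lemma mpu_exp_injOn : Set.InjOn (fun t : ℝ => Complex.exp (t * Complex.I)) (Set.Ioo 0 1) := by
  intro s hs t ht hst
  simp only at hst
  rw [Complex.exp_eq_exp_iff_exists_int] at hst
  obtain ⟨k, hk⟩ := hst
  have h3 : ((s : ℂ) - t - k * (2 * Real.pi)) * Complex.I = 0 := by rw [sub_mul, sub_mul, hk]; ring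
  have h4 : (s : ℂ) - t - k * (2 * Real.pi) = 0 := by
    rcases mul_eq_zero.mp h3 with h | h
    · exact h
    · exact absurd h Complex.I_ne_zero
  have hker : s - t - k * (2 * Real.pi) = 0 := by exact_mod_cast h4
  have hk0 : k = 0 := by
    rcases hs with ⟨hs1, hs2⟩; rcases ht with ⟨ht1, ht2⟩
    by_contra hk0
    have h1 : (1 : ℝ) ≤ |(k : ℝ)| := by
      have h1 : 1 ≤ |k| := Int.one_le_abs hk0
      calc (1:ℝ) ≤ (|k| : ℤ) := by exact_mod_cast h1
      _ = |(k:ℝ)| := by push_cast; ring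
    have hpi : (6 : ℝ) ≤ |(k : ℝ)| * (2 * Real.pi) := by
      have := Real.pi_gt_three
      nlinarith
    have habs : |(k : ℝ) * (2 * Real.pi)| = |(k:ℝ)| * (2 * Real.pi) := by
      rw [abs_mul, abs_of_pos (by positivity : (0:ℝ) < 2 * Real.pi)]
    have hst' : s - t = k * (2*Real.pi) := by linarith
    have : |s - t| < 1 := by rw [abs_sub_lt_iff]; constructor <;> linarith
    rw [hst', habs] at this
    linarith
  have : s - t = 0 := by rw [hk0] at hker; push_cast at hker; linarith
  linarith

lemma mpu_circle_le_ext (f1 f2 g : ℂ[X]) (hg : g ≠ 0)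
    (h : ∀ w : ℂ, ‖w‖ = 1 → g.eval w ≠ 0 →
      ‖f1.eval w‖ ≤ ‖f2.eval w‖) :
    ∀ α : ℂ, ‖α‖ = 1 → ‖f1.eval α‖ ≤ ‖f2.eval α‖ := by
  intro α hα
  set c : ℝ → ℂ := fun t => α * Complex.exp (t * Complex.I) with hcdef
  have hα0 : α ≠ 0 := by intro h0; rw [h0] at hα; simp at hα
  have habs : ∀ t : ℝ, ‖c t‖ = 1 := by
    intro t
    simp [hcdef, _root_.map_mul, Complex.norm_exp, hα]
  have hne : (nhdsWithin (0:ℝ) (Set.Ioo 0 1)).NeBot := by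
    rw [← mem_closure_iff_nhdsWithin_neBot, closure_Ioo (by norm_num : (0:ℝ) ≠ 1)]
    exact ⟨le_refl 0, by norm_num⟩
  have hccont : Continuous c := by continuity
  have hlim : Filter.Tendsto c (nhdsWithin 0 (Set.Ioo 0 1)) (nhds α) := by
    have h0 : c 0 = α := by simp [hcdef]
    have := (hccont.tendsto 0).mono_left (nhdsWithin_le_nhds (s := Set.Ioo (0:ℝ) 1))
    rwa [h0] at this
  have hinj : Set.InjOn c (Set.Ioo 0 1) := by
    intro s hs t ht hst
    apply mpu_exp_injOn hs ht
    have : α * Complex.exp (s * Complex.I) = α * Complex.exp (t * Complex.I) := hst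
    exact mul_left_cancel₀ hα0 this
  have hbadfin : {t : ℝ | t ∈ Set.Ioo (0:ℝ) 1 ∧ g.eval (c t) = 0}.Finite := by
    apply Set.Finite.of_finite_image (f := c)
    · apply Set.Finite.subset (Polynomial.finite_setOf_isRoot hg)
      rintro _ ⟨t, ⟨_, ht2⟩, rfl⟩
      exact ht2
    · exact hinj.mono (fun t ht => ht.1)
  have hbad0 : (0:ℝ) ∉ {t : ℝ | t ∈ Set.Ioo (0:ℝ) 1 ∧ g.eval (c t) = 0} := by
    rintro ⟨⟨h1, _⟩, _⟩; exact lt_irrefl _ h1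
  have hev : ∀ᶠ t in nhdsWithin 0 (Set.Ioo 0 1),
      ‖f1.eval (c t)‖ ≤ ‖f2.eval (c t)‖ := by
    have hmem : ∀ᶠ t in nhdsWithin (0:ℝ) (Set.Ioo 0 1), t ∈ Set.Ioo (0:ℝ) 1 :=
      self_mem_nhdsWithin
    have hnb : ∀ᶠ t in nhdsWithin (0:ℝ) (Set.Ioo 0 1),
        t ∉ {t : ℝ | t ∈ Set.Ioo (0:ℝ) 1 ∧ g.eval (c t) = 0} := by
      apply Filter.Eventually.filter_mono nhdsWithin_le_nhds
      exact hbadfin.isClosed.isOpen_compl.mem_nhds hbad0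
    filter_upwards [hmem, hnb] with t ht hnbt
    have hgne : g.eval (c t) ≠ 0 := fun h0 => hnbt ⟨ht, h0⟩
    exact h (c t) (habs t) hgne
  have h1lim : Filter.Tendsto (fun t => ‖f1.eval (c t)‖)
      (nhdsWithin 0 (Set.Ioo 0 1)) (nhds (‖f1.eval α‖)) :=
    (continuous_norm.tendsto _).comp ((f1.continuous_aeval.tendsto α).comp hlim)
  have h2lim : Filter.Tendsto (fun t => ‖f2.eval (c t)‖)
      (nhdsWithin 0 (Set.Ioo 0 1)) (nhds (‖f2.eval α‖)) :=
    (continuous_norm.tendsto _).comp ((f2.continuous_aeval.tendsto α).comp hlim)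
  exact le_of_tendsto_of_tendsto h1lim h2lim hev

lemma mpu_pow_dvd_aux (α : ℂ) (hα : ‖α‖ = 1) :
    ∀ (k : ℕ) (d q : ℂ[X]), d ≠ 0 → (X - C α) ^ k ∣ d →
      (∀ w : ℂ, ‖w‖ = 1 → d.eval w ≠ 0 →
        ‖q.eval w‖ ≤ ‖d.eval w‖) →
      (X - C α) ^ k ∣ q := by
  intro k
  induction k with
  | zero => intro d q _ _ _; simp
  | succ k ih =>
    intro d q hd hdvd h
    obtain ⟨d', hd'⟩ := hdvd
    set d1 : ℂ[X] := (X - C α) ^ k * d' with hd1def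
    have hdfact : d = (X - C α) * d1 := by rw [hd', hd1def, pow_succ]; ring
    have hdα : d.eval α = 0 := by rw [hdfact]; simp
    have hext := mpu_circle_le_ext q d d hd h
    have hqα : q.eval α = 0 := by
      have := hext α hα
      rw [hdα] at this
      simp only [norm_zero] at this
      exact norm_eq_zero.mp (le_antisymm this (norm_nonneg _))
    obtain ⟨q1, hq1⟩ := (Polynomial.dvd_iff_isRoot).mpr hqα
    have hd1ne : d1 ≠ 0 := by
      intro h0; rw [hdfact, h0, mul_zero] at hd; exact hd rfl
    -- bound for q1 vs d1 off roots of d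
    have hoff : ∀ w : ℂ, ‖w‖ = 1 → d.eval w ≠ 0 →
        ‖q1.eval w‖ ≤ ‖d1.eval w‖ := by
      intro w hw hdw
      have hwα : w ≠ α := by
        intro heq; rw [heq, hdα] at hdw; exact hdw rfl
      have hfac : ‖(X - C α).eval w‖ ≠ 0 := by
        simp only [eval_sub, eval_X, eval_C, ne_eq, norm_eq_zero]
        exact sub_ne_zero.mpr hwα
      have hq : ‖q.eval w‖
          = ‖(X - C α).eval w‖ * ‖q1.eval w‖ := by
        rw [hq1]; simp [_root_.map_mul]
      have hdw' : ‖d.eval w‖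
          = ‖(X - C α).eval w‖ * ‖d1.eval w‖ := by
        rw [hdfact]; simp [_root_.map_mul]
      have := h w hw hdw
      rw [hq, hdw'] at this
      exact le_of_mul_le_mul_left this (lt_of_le_of_ne (norm_nonneg _) (Ne.symm hfac))
    have hfull := mpu_circle_le_ext q1 d1 d hd hoff
    have hih := ih d1 q1 hd1ne ⟨d', rfl⟩ (fun w hw _ => hfull w hw)
    obtain ⟨q2, hq2⟩ := hih
    exact ⟨q2, by rw [hq1, hq2, pow_succ]; ring⟩

end MPUaux2

open Polynomial Matrix

noncomputable section MPUaux3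

lemma mpu_eval_map_conj (p : ℂ[X]) (z : ℂ) :
    (p.map (starRingEnd ℂ)).eval z = (starRingEnd ℂ) (p.eval ((starRingEnd ℂ) z)) := by
  induction p using Polynomial.induction_on' with
  | add p q hp hq => simp [hp, hq]
  | monomial n a => simp

lemma mpu_conj_inv_of_abs_one {w : ℂ} (hw : ‖w‖ = 1) :
    (starRingEnd ℂ) w⁻¹ = w := by
  have hw0 : w ≠ 0 := by
    intro h; rw [h] at hw; simp at hw
  have h1 : (starRingEnd ℂ) w * w = 1 := by
    rw [mul_comm, Complex.mul_conj, Complex.normSq_eq_norm_sq, hw]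
    norm_num
  have h2 : (starRingEnd ℂ) w = w⁻¹ := eq_inv_of_mul_eq_one_left h1
  rw [map_inv₀, h2, inv_inv]

lemma mpu_punctured_unit_disk_infinite :
    {u : ℂ | u ≠ 0 ∧ ‖u‖ < 1}.Infinite := by
  have h : (fun t : ℝ => (t : ℂ)) '' (Set.Ioo 0 1) ⊆ {u : ℂ | u ≠ 0 ∧ ‖u‖ < 1} := by
    rintro _ ⟨t, ⟨ht1, ht2⟩, rfl⟩
    constructor
    · simp only [ne_eq, Complex.ofReal_eq_zero]; exact ne_of_gt ht1
    · rw [Complex.norm_real, Real.norm_eq_abs, abs_of_pos ht1]; exact ht2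
  exact Set.Infinite.mono h
    ((Set.Ioo_infinite (by norm_num)).image
      ((Complex.ofReal_injective).injOn))

lemma mpu_map_mul {n : ℕ} (M N : Matrix (Fin n) (Fin n) ℂ[X]) (w : ℂ) :
    (M * N).map (Polynomial.eval w) = M.map (Polynomial.eval w) * N.map (Polynomial.eval w) := by
  have h : (Polynomial.eval w : ℂ[X] → ℂ) = ⇑(Polynomial.evalRingHom w) := rfl
  rw [h, Matrix.map_mul]

lemma mpu_map_det {n : ℕ} (M : Matrix (Fin n) (Fin n) ℂ[X]) (w : ℂ) :
    (M.map (Polynomial.eval w)).det = M.det.eval w := by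
  have h : (Polynomial.eval w : ℂ[X] → ℂ) = ⇑(Polynomial.evalRingHom w) := rfl
  rw [h, ← RingHom.mapMatrix_apply, ← RingHom.map_det]

lemma mpu_map_adj {n : ℕ} (M : Matrix (Fin n) (Fin n) ℂ[X]) (w : ℂ) :
    (M.map (Polynomial.eval w)).adjugate = M.adjugate.map (Polynomial.eval w) := by
  have h : (Polynomial.eval w : ℂ[X] → ℂ) = ⇑(Polynomial.evalRingHom w) := rfl
  rw [h, ← RingHom.mapMatrix_apply, ← RingHom.mapMatrix_apply, RingHom.map_adjugate]

end MPUaux3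

noncomputable section MPUmain

lemma mpu_hat_eval {n : ℕ} (M : Matrix (Fin n) (Fin n) ℂ[X]) (D : ℕ)
    (hD : ∀ i j, (M i j).natDegree ≤ D) {w : ℂ} (hw : w ≠ 0) :
    (Matrix.of (fun i j => mpuRefl D ((M j i).map (starRingEnd ℂ)))).map (Polynomial.eval w)
      = w ^ D • (M.map (Polynomial.eval ((starRingEnd ℂ) w⁻¹)))ᴴ := by
  ext i j
  simp only [Matrix.map_apply, Matrix.of_apply, Matrix.smul_apply,
    Matrix.conjTranspose_apply, smul_eq_mul]
  rw [mpuRefl_eval (le_trans Polynomial.natDegree_map_le (hD j i)) hw, mpu_eval_map_conj]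
  rfl



theorem matrix_polynomial_unitary_equivalence {n : ℕ}
    (E E2 : Matrix (Fin n) (Fin n) (Polynomial ℂ))
    (hE : ∀ w : ℂ, ‖w‖ < 1 → IsUnit (E.map (Polynomial.eval w)))
    (hE2 : ∀ w : ℂ, ‖w‖ < 1 → IsUnit (E2.map (Polynomial.eval w)))
    (hcirc : ∀ w : ℂ, ‖w‖ = 1 →
      (E.map (Polynomial.eval w)).conjTranspose * E.map (Polynomial.eval w) =
        (E2.map (Polynomial.eval w)).conjTranspose * E2.map (Polynomial.eval w)) :
    ∃ U ∈ Matrix.unitaryGroup (Fin n) ℂ,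
      ∀ w : ℂ, E2.map (Polynomial.eval w) = U * E.map (Polynomial.eval w) := by
  classical
  set D : ℕ := Finset.univ.sup
    (fun ij : Fin n × Fin n => max (E ij.1 ij.2).natDegree (E2 ij.1 ij.2).natDegree) with hD
  have hDE : ∀ i j, (E i j).natDegree ≤ D := by
    intro i j
    rw [hD]
    exact le_trans (le_max_left _ _) (Finset.le_sup
      (f := fun ij : Fin n × Fin n => max (E ij.1 ij.2).natDegree (E2 ij.1 ij.2).natDegree)
      (Finset.mem_univ (i, j)))
  have hDE2 : ∀ i j, (E2 i j).natDegree ≤ D := by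
    intro i j
    rw [hD]
    exact le_trans (le_max_right _ _) (Finset.le_sup
      (f := fun ij : Fin n × Fin n => max (E ij.1 ij.2).natDegree (E2 ij.1 ij.2).natDegree)
      (Finset.mem_univ (i, j)))
  set Eh : Matrix (Fin n) (Fin n) ℂ[X] :=
    Matrix.of (fun i j => mpuRefl D ((E j i).map (starRingEnd ℂ))) with hEhdef
  set E2h : Matrix (Fin n) (Fin n) ℂ[X] :=
    Matrix.of (fun i j => mpuRefl D ((E2 j i).map (starRingEnd ℂ))) with hE2hdef
  have hEhev : ∀ w : ℂ, w ≠ 0 → Eh.map (Polynomial.eval w)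
      = w ^ D • (E.map (Polynomial.eval ((starRingEnd ℂ) w⁻¹)))ᴴ :=
    fun w hw => mpu_hat_eval E D hDE hw
  have hE2hev : ∀ w : ℂ, w ≠ 0 → E2h.map (Polynomial.eval w)
      = w ^ D • (E2.map (Polynomial.eval ((starRingEnd ℂ) w⁻¹)))ᴴ :=
    fun w hw => mpu_hat_eval E2 D hDE2 hw
  have hstar : Eh * E = E2h * E2 := by
    have hmat : ∀ w : ℂ, ‖w‖ = 1 →
        (Eh * E).map (Polynomial.eval w) = (E2h * E2).map (Polynomial.eval w) := by
      intro w hw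
      have hw0 : w ≠ 0 := fun h => by rw [h] at hw; simp at hw
      rw [mpu_map_mul, mpu_map_mul, hEhev w hw0, hE2hev w hw0, mpu_conj_inv_of_abs_one hw,
        smul_mul_assoc, smul_mul_assoc, hcirc w hw]
    funext i j
    apply mpu_eq_of_eval_eq {w : ℂ | ‖w‖ = 1} mpu_circle_infinite
    intro w hw
    have := congrFun (congrFun (hmat w hw) i) j
    simpa [Matrix.map_apply] using this
  set d : ℂ[X] := E.det with hdd
  have hdisk : ∀ w : ℂ, ‖w‖ < 1 → d.eval w ≠ 0 := by
    intro w hw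
    have h1 := (Matrix.isUnit_iff_isUnit_det _).mp (hE w hw)
    rw [mpu_map_det] at h1
    exact h1.ne_zero
  have hdne : d ≠ 0 := fun h => hdisk 0 (by simp) (by rw [h]; simp)
  set dh2 : ℂ[X] := E2h.det with hdh2def
  have hdh2 : ∀ α : ℂ, 1 < ‖α‖ → dh2.eval α ≠ 0 := by
    intro α hα
    have hα0 : α ≠ 0 := by
      intro h; rw [h] at hα; simp at hα; linarith
    have hz : ‖(starRingEnd ℂ) α⁻¹‖ < 1 := by
      rw [map_inv₀, norm_inv, Complex.norm_conj]
      exact inv_lt_one_of_one_lt₀ hα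
    have hev : dh2.eval α = (α ^ D) ^ n *
        star ((E2.map (Polynomial.eval ((starRingEnd ℂ) α⁻¹))).det) := by
      rw [← mpu_map_det, hE2hev α hα0, Matrix.det_smul, Matrix.det_conjTranspose]
      simp [Fintype.card_fin]
    rw [hev]
    apply mul_ne_zero (pow_ne_zero _ (pow_ne_zero _ hα0))
    rw [star_ne_zero]
    exact ((Matrix.isUnit_iff_isUnit_det _).mp (hE2 _ hz)).ne_zero
  set q : Matrix (Fin n) (Fin n) ℂ[X] := E2 * E.adjugate with hqdef
  set r : Matrix (Fin n) (Fin n) ℂ[X] := E2h.adjugate * Eh with hrdef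
  have hkey : d • r = dh2 • q := by
    have h1 : E2h.adjugate * (Eh * E * E.adjugate) = E2h.adjugate * (E2h * E2 * E.adjugate) := by
      rw [hstar]
    have h2 : E2h.adjugate * (Eh * E * E.adjugate) = d • r := by
      rw [Matrix.mul_assoc Eh E, Matrix.mul_adjugate, mul_smul_comm, Matrix.mul_one,
        mul_smul_comm, hrdef]
    have h3 : E2h.adjugate * (E2h * E2 * E.adjugate) = dh2 • q := by
      rw [Matrix.mul_assoc E2h E2, ← Matrix.mul_assoc E2h.adjugate E2h,
        Matrix.adjugate_mul, smul_mul_assoc, Matrix.one_mul, hqdef]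
    rw [← h2, h1, h3]
  have hkeyent : ∀ i j, d * r i j = dh2 * q i j := by
    intro i j
    have := congrFun (congrFun hkey i) j
    simpa [Matrix.smul_apply, smul_eq_mul] using this
  have hbound : ∀ i j, ∀ w : ℂ, ‖w‖ = 1 → d.eval w ≠ 0 →
      ‖(q i j).eval w‖ ≤ ‖d.eval w‖ := by
    intro i j w hw hdw
    set A : Matrix (Fin n) (Fin n) ℂ := E.map (Polynomial.eval w) with hA
    set B : Matrix (Fin n) (Fin n) ℂ := E2.map (Polynomial.eval w) with hB
    have hdetA : IsUnit A.det := by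
      rw [hA, mpu_map_det]; exact isUnit_iff_ne_zero.mpr hdw
    have hinvA : A⁻¹ * A = 1 := Matrix.nonsing_inv_mul A hdetA
    have hAinv : A * A⁻¹ = 1 := Matrix.mul_nonsing_inv A hdetA
    set Θ : Matrix (Fin n) (Fin n) ℂ := B * A⁻¹ with hTh
    have hunit : Θᴴ * Θ = 1 := by
      rw [hTh, Matrix.conjTranspose_mul]
      calc A⁻¹ᴴ * Bᴴ * (B * A⁻¹) = A⁻¹ᴴ * (Bᴴ * B * A⁻¹) := by
            simp only [Matrix.mul_assoc]
        _ = A⁻¹ᴴ * (Aᴴ * A * A⁻¹) := by rw [← hcirc w hw]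
        _ = A⁻¹ᴴ * Aᴴ * (A * A⁻¹) := by simp only [Matrix.mul_assoc]
        _ = (A * A⁻¹)ᴴ * (A * A⁻¹) := by rw [Matrix.conjTranspose_mul]
        _ = 1 := by rw [hAinv, Matrix.conjTranspose_one, Matrix.one_mul]
    have hcol : ∑ k, Complex.normSq (Θ k j) = 1 := by
      have h11 : (Θᴴ * Θ) j j = 1 := by rw [hunit]; simp [Matrix.one_apply]
      rw [Matrix.mul_apply] at h11
      have h12 : ∀ k, Θᴴ j k * Θ k j = (Complex.normSq (Θ k j) : ℂ) := by
        intro k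
        rw [Matrix.conjTranspose_apply]
        exact Complex.star_def ▸ Complex.normSq_eq_conj_mul_self.symm
      rw [Finset.sum_congr rfl (fun k _ => h12 k)] at h11
      exact_mod_cast h11
    have hentry : ‖Θ i j‖ ≤ 1 := by
      have h1 : Complex.normSq (Θ i j) ≤ 1 := by
        rw [← hcol]
        exact Finset.single_le_sum (f := fun k => Complex.normSq (Θ k j))
          (fun k _ => Complex.normSq_nonneg _) (Finset.mem_univ i)
      have h2 : ‖Θ i j‖ ^ 2 ≤ 1 := by rw [Complex.sq_norm]; exact h1
      nlinarith [norm_nonneg (Θ i j)]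
    have hadj : A.adjugate = A.det • A⁻¹ := by
      calc A.adjugate = A⁻¹ * A * A.adjugate := by rw [hinvA, Matrix.one_mul]
        _ = A⁻¹ * (A * A.adjugate) := by rw [Matrix.mul_assoc]
        _ = A⁻¹ * (A.det • 1) := by rw [Matrix.mul_adjugate]
        _ = A.det • A⁻¹ := by rw [mul_smul_comm, Matrix.mul_one]
    have hqv : (q i j).eval w = A.det * Θ i j := by
      have h2 : (q i j).eval w = (B * A.adjugate) i j := by
        have h3 : q.map (Polynomial.eval w) = B * A.adjugate := by
          rw [hqdef, mpu_map_mul, hA, mpu_map_adj]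
        have := congrFun (congrFun h3 i) j
        simpa [Matrix.map_apply] using this
      rw [h2, hadj, mul_smul_comm]
      simp [Matrix.smul_apply, smul_eq_mul, hTh]
    rw [hqv, norm_mul]
    have hdA : ‖d.eval w‖ = ‖A.det‖ := by
      rw [hA, mpu_map_det]
    rw [hdA]
    calc ‖A.det‖ * ‖Θ i j‖ ≤ ‖A.det‖ * 1 :=
          mul_le_mul_of_nonneg_left hentry (norm_nonneg _)
      _ = ‖A.det‖ := mul_one _
  -- divisibility
  have hdvd : ∀ i j, d ∣ q i j := by
    intro i j
    by_cases hq0 : q i j = 0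
    · rw [hq0]; exact dvd_zero d
    have hroots : d.roots ≤ (q i j).roots := by
      rw [Multiset.le_iff_count]
      intro a
      rw [Polynomial.count_roots, Polynomial.count_roots]
      by_cases hra : d.IsRoot a
      · rw [Polynomial.le_rootMultiplicity_iff hq0]
        rcases lt_trichotomy (‖a‖) 1 with h1 | h1 | h1
        · exact absurd hra (hdisk a h1)
        · exact mpu_pow_dvd_aux a h1 _ d (q i j) hdne
            (Polynomial.pow_rootMultiplicity_dvd d a)
            (fun w hw hdw => hbound i j w hw hdw)
        · have hdvd2 : (X - C a) ^ (d.rootMultiplicity a) ∣ dh2 * q i j := by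
            refine dvd_trans (Polynomial.pow_rootMultiplicity_dvd d a) ⟨r i j, ?_⟩
            rw [← hkeyent i j]
          have hnd : ¬ (X - C a) ∣ dh2 := by
            rw [Polynomial.dvd_iff_isRoot]
            exact fun hroot => hdh2 a h1 hroot
          exact (Polynomial.prime_X_sub_C a).pow_dvd_of_dvd_mul_left _ hnd hdvd2
      · rw [Polynomial.rootMultiplicity_eq_zero hra]; exact Nat.zero_le _
    have hsplit : Multiset.card d.roots = d.natDegree :=
      (Polynomial.splits_iff_card_roots).mp (IsAlgClosed.splits d)
    have hlcu : IsUnit (C d.leadingCoeff) :=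
      Polynomial.isUnit_C.mpr (isUnit_iff_ne_zero.mpr (Polynomial.leadingCoeff_ne_zero.mpr hdne))
    have hassoc : Associated ((d.roots.map fun a => X - C a).prod) d := by
      refine ⟨hlcu.unit, ?_⟩
      rw [IsUnit.unit_spec, mul_comm]
      exact Polynomial.C_leadingCoeff_mul_prod_multiset_X_sub_C hsplit
    exact (Associated.dvd_iff_dvd_left hassoc).mp
      (dvd_trans (Multiset.prod_dvd_prod_of_le (Multiset.map_le_map hroots))
        ((q i j).prod_multiset_X_sub_C_dvd))
  -- quotient matrix
  have hCmex : ∃ Cm : Matrix (Fin n) (Fin n) ℂ[X], q = d • Cm := by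
    refine ⟨fun i j => Classical.choose (hdvd i j), ?_⟩
    funext i j
    have := Classical.choose_spec (hdvd i j)
    exact this
  obtain ⟨Cm, hCmq⟩ := hCmex
  have hE2C : E2 = Cm * E := by
    have h1 : q * E = d • E2 := by
      rw [hqdef, Matrix.mul_assoc, Matrix.adjugate_mul, mul_smul_comm, Matrix.mul_one]
    have h2 : q * E = d • (Cm * E) := by rw [hCmq, smul_mul_assoc]
    funext i j
    have h3 : d * E2 i j = d * (Cm * E) i j := by
      have := congrFun (congrFun (h1.symm.trans h2) i) j
      simpa [Matrix.smul_apply, smul_eq_mul] using this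
    exact mul_left_cancel₀ hdne h3
  have hhatC : Eh = E2h * Cm := by
    have h1 : (Eh - E2h * Cm) * E = 0 := by
      rw [Matrix.sub_mul, Matrix.mul_assoc, ← hE2C, hstar, sub_self]
    have h2 : d • (Eh - E2h * Cm) = 0 := by
      calc d • (Eh - E2h * Cm) = (Eh - E2h * Cm) * (E * E.adjugate) := by
            rw [Matrix.mul_adjugate, mul_smul_comm, Matrix.mul_one]
        _ = (Eh - E2h * Cm) * E * E.adjugate := by rw [Matrix.mul_assoc]
        _ = 0 := by rw [h1, Matrix.zero_mul]
    have h3 : Eh - E2h * Cm = 0 := by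
      funext i j
      have := congrFun (congrFun h2 i) j
      simp only [Matrix.smul_apply, smul_eq_mul, Matrix.zero_apply] at this
      rcases mul_eq_zero.mp this with h | h
      · exact absurd h hdne
      · exact h
    have := sub_eq_zero.mp h3
    exact this
  set Km : Matrix (Fin n) (Fin n) ℂ[X] :=
    Matrix.of (fun i j => (Cm j i).map (starRingEnd ℂ)) with hKmdef
  have hKC : ∀ w : ℂ, 1 < ‖w‖ →
      Km.map (Polynomial.eval w⁻¹) * Cm.map (Polynomial.eval w) = 1 := by
    intro w hw
    have hw0 : w ≠ 0 := fun h => by rw [h] at hw; simp at hw; linarith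
    set z : ℂ := (starRingEnd ℂ) w⁻¹ with hz
    have hzabs : ‖z‖ < 1 := by
      rw [hz, map_inv₀, norm_inv, Complex.norm_conj]
      exact inv_lt_one_of_one_lt₀ hw
    set A : Matrix (Fin n) (Fin n) ℂ := E.map (Polynomial.eval z) with hA
    have hdetA : IsUnit A.det := by
      rw [hA, mpu_map_det]; exact isUnit_iff_ne_zero.mpr (hdisk z hzabs)
    have hdetAH : IsUnit Aᴴ.det := by
      rw [Matrix.det_conjTranspose]; exact hdetA.star
    have h1 : Eh.map (Polynomial.eval w) = E2h.map (Polynomial.eval w) * Cm.map (Polynomial.eval w) := by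
      rw [hhatC, mpu_map_mul]
    rw [hEhev w hw0, hE2hev w hw0] at h1
    have hB2 : (E2.map (Polynomial.eval z))ᴴ = Aᴴ * (Cm.map (Polynomial.eval z))ᴴ := by
      have h4 : E2.map (Polynomial.eval z) = Cm.map (Polynomial.eval z) * A := by
        rw [hE2C, mpu_map_mul, hA]
      rw [h4, Matrix.conjTranspose_mul]
    rw [hB2] at h1
    have h5 : Aᴴ = Aᴴ * ((Cm.map (Polynomial.eval z))ᴴ * Cm.map (Polynomial.eval w)) := by
      rw [smul_mul_assoc] at h1
      have h6 := smul_right_injective (Matrix (Fin n) (Fin n) ℂ) (pow_ne_zero D hw0) h1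
      rw [Matrix.mul_assoc] at h6
      exact h6
    have h8 : Aᴴ⁻¹ * Aᴴ = 1 := Matrix.nonsing_inv_mul _ hdetAH
    have h7 : (Cm.map (Polynomial.eval z))ᴴ * Cm.map (Polynomial.eval w) = 1 := by
      calc (Cm.map (Polynomial.eval z))ᴴ * Cm.map (Polynomial.eval w)
          = Aᴴ⁻¹ * (Aᴴ * ((Cm.map (Polynomial.eval z))ᴴ * Cm.map (Polynomial.eval w))) := by
            rw [← Matrix.mul_assoc, h8, Matrix.one_mul]
        _ = Aᴴ⁻¹ * Aᴴ := by rw [← h5]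
        _ = 1 := h8
    have h9 : Km.map (Polynomial.eval w⁻¹) = (Cm.map (Polynomial.eval z))ᴴ := by
      funext i j
      simp only [hKmdef, Matrix.map_apply, Matrix.of_apply, Matrix.conjTranspose_apply]
      rw [mpu_eval_map_conj, hz]
      rfl
    rw [h9]
    exact h7
  have hδ0 : Cm.det.eval 0 ≠ 0 := by
    have hdetmul : E2.det = Cm.det * d := by rw [hE2C, Matrix.det_mul, hdd]
    have h0 : E2.det.eval 0 ≠ 0 := by
      have := (Matrix.isUnit_iff_isUnit_det _).mp (hE2 0 (by simp))
      rw [mpu_map_det] at this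
      exact this.ne_zero
    intro hc
    apply h0
    rw [hdetmul, Polynomial.eval_mul, hc, zero_mul]
  have hκ0 : Km.det.eval 0 ≠ 0 := by
    have h9 : Km.map (Polynomial.eval 0) = (Cm.map (Polynomial.eval 0))ᴴ := by
      funext i j
      simp only [hKmdef, Matrix.map_apply, Matrix.of_apply, Matrix.conjTranspose_apply]
      rw [mpu_eval_map_conj]
      norm_num
    rw [← mpu_map_det, h9, Matrix.det_conjTranspose, star_ne_zero, mpu_map_det]
    exact hδ0
  have hconst : ∀ i j, Cm i j = C ((Cm i j).coeff 0) := by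
    intro i j
    have hAC : ∀ w : ℂ, 1 < ‖w‖ →
        (Km.adjugate i j).eval w⁻¹ = Km.det.eval w⁻¹ * (Cm i j).eval w := by
      intro w hw
      have hKC' := hKC w hw
      set K' : Matrix (Fin n) (Fin n) ℂ := Km.map (Polynomial.eval w⁻¹) with hK'
      set C' : Matrix (Fin n) (Fin n) ℂ := Cm.map (Polynomial.eval w) with hC'
      have hadj : K'.adjugate = K'.det • C' := by
        calc K'.adjugate = K'.adjugate * (K' * C') := by rw [hKC', Matrix.mul_one]
          _ = (K'.adjugate * K') * C' := by rw [Matrix.mul_assoc]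
          _ = (K'.det • 1) * C' := by rw [Matrix.adjugate_mul]
          _ = K'.det • C' := by rw [smul_mul_assoc, Matrix.one_mul]
      have h10 : (Km.adjugate.map (Polynomial.eval w⁻¹)) i j = (K'.det • C') i j := by
        rw [← mpu_map_adj, hadj]
      simp only [Matrix.map_apply, Matrix.smul_apply, smul_eq_mul] at h10
      rw [h10, hK', mpu_map_det, hC', Matrix.map_apply]
    set c : ℂ[X] := Cm i j with hc
    set k : ℕ := c.natDegree with hk
    have hpoly : X ^ k * Km.adjugate i j = Km.det * mpuRefl k c := by
      apply mpu_eq_of_eval_eq {u : ℂ | u ≠ 0 ∧ ‖u‖ < 1} mpu_punctured_unit_disk_infinite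
      rintro u ⟨hu0, hu1⟩
      have hupos : 0 < ‖u‖ := by
        rcases norm_pos_iff.mpr hu0 with h
        exact h
      have hw : 1 < ‖u⁻¹‖ := by
        rw [norm_inv]
        exact (one_lt_inv₀ hupos).mpr hu1
      have h11 := hAC u⁻¹ hw
      rw [inv_inv] at h11
      rw [Polynomial.eval_mul, Polynomial.eval_mul, Polynomial.eval_pow, Polynomial.eval_X,
        mpuRefl_eval (le_of_eq hk.symm) hu0, h11]
      ring
    by_cases hk0 : k = 0
    · exact Polynomial.eq_C_of_natDegree_eq_zero hk0
    · exfalso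
      have h0 := congrArg (Polynomial.eval 0) hpoly
      rw [Polynomial.eval_mul, Polynomial.eval_mul, Polynomial.eval_pow, Polynomial.eval_X,
        zero_pow hk0, zero_mul, mpuRefl_eval_zero] at h0
      have hcne : c ≠ 0 := fun h => hk0 (by rw [hk, h]; simp)
      have hlc : c.coeff k ≠ 0 := by
        rw [hk]
        exact Polynomial.leadingCoeff_ne_zero.mpr hcne
      rcases mul_eq_zero.mp h0.symm with h | h
      · exact hκ0 h
      · exact hlc h
  set U : Matrix (Fin n) (Fin n) ℂ := Cm.map (Polynomial.eval 0) with hU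
  have hCmap : ∀ w : ℂ, Cm.map (Polynomial.eval w) = U := by
    intro w
    funext i j
    simp only [hU, Matrix.map_apply]
    conv_lhs => rw [hconst i j]
    conv_rhs => rw [hconst i j]
    simp
  have hfinal : ∀ w : ℂ, E2.map (Polynomial.eval w) = U * E.map (Polynomial.eval w) := by
    intro w
    rw [hE2C, mpu_map_mul, hCmap w]
  have hw0ex : ∃ w0 : ℂ, ‖w0‖ = 1 ∧ d.eval w0 ≠ 0 := by
    obtain ⟨w0, hw1, hw2⟩ :=
      (mpu_circle_infinite.diff (Polynomial.finite_setOf_isRoot hdne)).nonempty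
    exact ⟨w0, hw1, fun h => hw2 h⟩
  obtain ⟨w0, hw0c, hw0d⟩ := hw0ex
  set A : Matrix (Fin n) (Fin n) ℂ := E.map (Polynomial.eval w0) with hA
  have hdetA : IsUnit A.det := by rw [hA, mpu_map_det]; exact isUnit_iff_ne_zero.mpr hw0d
  have hdetAH : IsUnit Aᴴ.det := by rw [Matrix.det_conjTranspose]; exact hdetA.star
  have hcc := hcirc w0 hw0c
  rw [hfinal w0, Matrix.conjTranspose_mul] at hcc
  have hUU : Uᴴ * U = 1 := by
    have h1 : Aᴴ * (Uᴴ * U * A) = Aᴴ * (1 * A) := by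
      calc Aᴴ * (Uᴴ * U * A) = Aᴴ * Uᴴ * (U * A) := by simp only [Matrix.mul_assoc]
        _ = Aᴴ * A := hcc.symm
        _ = Aᴴ * (1 * A) := by rw [Matrix.one_mul]
    have h2 : Uᴴ * U * A = 1 * A :=
      (IsUnit.mul_right_inj ((Matrix.isUnit_iff_isUnit_det _).mpr hdetAH)).mp h1
    exact (IsUnit.mul_left_inj ((Matrix.isUnit_iff_isUnit_det _).mpr hdetA)).mp h2
  refine ⟨U, ?_, hfinal⟩
  rw [Matrix.mem_unitaryGroup_iff']
  exact hUU

end MPUmain
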